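/- For any N ≥ 1, the sum over all non-identity permutations σ in Sym(N) of e^{−β·d_C(e,σ)} (the Gershgorin radius of the Cayley distance kernel) equals e^{−βN}·∏_{k=0}^{N−1}(e^β + k) − 1. -/

import Mathlib

open Equiv

/-- Number of cycles (orbits, including fixed points) of a permutation. -/
def numCycles {N : ℕ} (σ : Perm (Fin N)) : ℕ :=
  (Finset.univ.filter fun x => σ x = x).card + σ.cycleType.card

/-- Cayley distance on `Sym(N)`: `d_C(σ₁,σ₂) = N − #cycles(σ₁⁻¹∘σ₂)`. -/
def cayleyDist {N : ℕ} (σ₁ σ₂ : Perm (Fin N)) : ℕ :=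
  N - numCycles (σ₁⁻¹ * σ₂)

/-- The Cayley distance kernel at inverse temperature `β` on `Sym(N)`. -/
noncomputable def cayleyKernel (N : ℕ) (β : ℝ) :
    Matrix (Perm (Fin N)) (Perm (Fin N)) ℝ :=
  Matrix.of fun σ₁ σ₂ => Real.exp (-β * (cayleyDist σ₁ σ₂ : ℝ))


section Aux
open Finset

set_option linter.unusedSectionVars false
set_option linter.unusedVariables false
set_option linter.unusedTactic false

variable {α : Type*} [DecidableEq α] [Fintype α]

/-- General cycle-count (orbit count). -/
def ncG (σ : Perm α) : ℕ := (Fintype.card α - σ.support.card) + σ.cycleType.card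

lemma multiset_card_le_sum (m : Multiset ℕ) (h : ∀ x ∈ m, 1 ≤ x) : m.card ≤ m.sum := by
  induction m using Multiset.induction with
  | empty => simp
  | cons a s ih =>
    have h1 := h a (by simp)
    have h2 := ih (fun x hx => h x (by simp [hx]))
    simp only [Multiset.card_cons, Multiset.sum_cons]
    omega

lemma cycleType_card_le_support (σ : Perm α) :
    σ.cycleType.card ≤ σ.support.card := by
  rw [← Equiv.Perm.sum_cycleType]
  exact multiset_card_le_sum _ fun x hx =>
    le_trans (by norm_num) (Equiv.Perm.two_le_of_mem_cycleType hx)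

lemma pow_fix (c : Perm α) {a : α} (ha : c a = a) : ∀ n : ℕ, (c ^ n) a = a := by
  intro n
  induction n with
  | zero => simp
  | succ n ih => rw [pow_succ, Perm.mul_apply, ha, ih]

lemma support_swap_mul_fix {c : Perm α} {a b : α} (hab : a ≠ b)
    (ha : c a = a) (hb : c b ≠ b) :
    (swap a b * c).support = insert a c.support := by
  ext x
  simp only [Equiv.Perm.mem_support, Finset.mem_insert, Perm.mul_apply]
  constructor
  · intro h
    by_contra h'
    push_neg at h'
    obtain ⟨hxa, hx⟩ := h'
    apply h
    rcases eq_or_ne x b with rfl | hxb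
    · exact absurd hx hb
    · rw [hx, swap_apply_of_ne_of_ne hxa hxb]
  · rintro (rfl | hx)
    · rw [ha, swap_apply_left]; exact hab.symm
    · intro h
      have hca : c x ≠ a := by
        intro h'
        exact hx (by rw [show x = a from c.injective (h'.trans ha.symm), ha])
      rcases eq_or_ne (c x) b with hcb | hcb
      · rw [hcb, swap_apply_right] at h
        exact hx (h ▸ ha)
      · rw [swap_apply_of_ne_of_ne hca hcb] at h
        exact hx h

lemma isCycle_swap_mul_fix {c : Perm α} {a b : α} (hab : a ≠ b)
    (ha : c a = a) (hb : c b ≠ b) (hc : c.IsCycle) :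
    (swap a b * c).IsCycle := by
  have hmove : (swap a b * c) a = b := by rw [Perm.mul_apply, ha, swap_apply_left]
  refine ⟨a, by rw [hmove]; exact hab.symm, ?_⟩
  intro y hy
  rcases eq_or_ne y a with rfl | hya
  · exact Equiv.Perm.SameCycle.refl _ _
  · have hcy : c y ≠ y := by
      have : y ∈ (swap a b * c).support := Equiv.Perm.mem_support.mpr hy
      rw [support_swap_mul_fix hab ha hb, Finset.mem_insert] at this
      rcases this with rfl | h
      · exact absurd rfl hya
      · exact Equiv.Perm.mem_support.mp h
    have hsc : Equiv.Perm.SameCycle c b y := hc.sameCycle hb hcy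
    obtain ⟨k, -, hk⟩ := hsc.exists_pow_eq'
    have hP : ∃ m : ℕ, (c ^ m) b = y := ⟨k, hk⟩
    set k0 := Nat.find hP with hk0def
    have hk0 : (c ^ k0) b = y := Nat.find_spec hP
    have hmin : ∀ j, 0 < j → j ≤ k0 → (c ^ j) b ≠ b := by
      intro j hj0 hjk hjb
      have hlt : k0 - j < k0 := by omega
      apply Nat.find_min hP hlt
      have : (c ^ (k0 - j + j)) b = y := by rw [Nat.sub_add_cancel hjk]; exact hk0
      rwa [pow_add, Perm.mul_apply, hjb] at this
    have key : ∀ m : ℕ, m ≤ k0 → ((swap a b * c) ^ (m + 1)) a = (c ^ m) b := by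
      intro m
      induction m with
      | zero => intro _; simpa using hmove
      | succ m ih =>
        intro hm
        have h1 := ih (by omega)
        rw [pow_succ', Perm.mul_apply, h1]
        have hstep : c ((c ^ m) b) = (c ^ (m + 1)) b := by
          rw [pow_succ', Perm.mul_apply]
        rw [Perm.mul_apply, hstep]
        have hne_a : (c ^ (m + 1)) b ≠ a := by
          intro h
          exact hab.symm ((c ^ (m + 1)).injective (by rw [h, pow_fix c ha]))
        have hne_b : (c ^ (m + 1)) b ≠ b := hmin (m + 1) (by omega) hm
        rw [swap_apply_of_ne_of_ne hne_a hne_b]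
    exact ⟨((k0 + 1 : ℕ) : ℤ), by rw [zpow_natCast, key k0 le_rfl, hk0]⟩

/-- Key lemma: multiplying by a transposition moving a fixed point decreases
the orbit count by one. -/
lemma ncG_swap_mul {τ : Perm α} {a b : α} (hab : a ≠ b) (ha : τ a = a) :
    ncG (swap a b * τ) + 1 = ncG τ := by
  have haS : a ∉ τ.support := by simp [Equiv.Perm.mem_support, ha]
  have hsupp_le : τ.support.card ≤ Fintype.card α := Finset.card_le_univ _
  rcases eq_or_ne (τ b) b with hb | hb
  · -- `b` also fixed: a new 2-cycle appears
    have hbS : b ∉ τ.support := by simp [Equiv.Perm.mem_support, hb]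
    have hd : Equiv.Perm.Disjoint (swap a b) τ := by
      intro x
      rcases eq_or_ne x a with rfl | hxa
      · exact Or.inr ha
      rcases eq_or_ne x b with rfl | hxb
      · exact Or.inr hb
      · exact Or.inl (swap_apply_of_ne_of_ne hxa hxb)
    have hdisj : Disjoint ({a, b} : Finset α) τ.support := by
      simp only [Finset.disjoint_insert_left, Finset.disjoint_singleton_left]
      exact ⟨haS, hbS⟩
    have hsup : (swap a b * τ).support.card = τ.support.card + 2 := by
      rw [hd.support_mul, Equiv.Perm.support_swap hab,
        Finset.card_union_of_disjoint hdisj, Finset.card_pair hab, add_comm]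
    have h2 : τ.support.card + 2 ≤ Fintype.card α := by
      have := Finset.card_le_univ (swap a b * τ).support
      omega
    have hct : (swap a b * τ).cycleType.card = τ.cycleType.card + 1 := by
      rw [hd.cycleType_mul, (Equiv.Perm.isCycle_swap hab).cycleType]
      simp [add_comm]
    unfold ncG
    rw [hsup, hct]
    omega
  · -- `b` moved: `a` is inserted into the cycle of `b`
    have hbS : b ∈ τ.support := Equiv.Perm.mem_support.mpr hb
    set c := τ.cycleOf b with hcdef
    have hcmem : c ∈ τ.cycleFactorsFinset :=
      Equiv.Perm.cycleOf_mem_cycleFactorsFinset_iff.mpr hbS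
    have hdis : Equiv.Perm.Disjoint (τ * c⁻¹) c :=
      Equiv.Perm.disjoint_mul_inv_of_mem_cycleFactorsFinset hcmem
    set ρ := τ * c⁻¹ with hρdef
    have hτ : τ = ρ * c := by rw [hρdef, inv_mul_cancel_right]
    have hsupc : c.support ⊆ τ.support :=
      Equiv.Perm.mem_cycleFactorsFinset_support_le hcmem
    have hbc : c b ≠ b := by
      have : b ∈ c.support := by
        rw [hcdef, Equiv.Perm.mem_support_cycleOf_iff]
        exact ⟨Equiv.Perm.SameCycle.refl _ _, hbS⟩
      exact Equiv.Perm.mem_support.mp this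
    have hac : c a = a := by
      by_contra h
      exact haS (hsupc (Equiv.Perm.mem_support.mpr h))
    have hcIs : c.IsCycle := Equiv.Perm.isCycle_cycleOf τ hb
    have hsupρc : Disjoint ρ.support c.support := hdis.disjoint_support
    have hsupτ : τ.support = ρ.support ∪ c.support := by
      rw [hτ, hdis.support_mul]
    have haρ : a ∉ ρ.support := fun h => haS (hsupτ ▸ Finset.mem_union_left _ h)
    have hbρ : b ∉ ρ.support :=
      fun h => (Finset.disjoint_left.mp hsupρc h) (Equiv.Perm.mem_support.mpr hbc)
    have hdswapρ : Equiv.Perm.Disjoint (swap a b) ρ := by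
      intro x
      rcases eq_or_ne x a with rfl | hxa
      · exact Or.inr (by simpa [Equiv.Perm.mem_support] using haρ)
      rcases eq_or_ne x b with rfl | hxb
      · exact Or.inr (by simpa [Equiv.Perm.mem_support] using hbρ)
      · exact Or.inl (swap_apply_of_ne_of_ne hxa hxb)
    set c2 := swap a b * c with hc2def
    have hσ' : swap a b * τ = ρ * c2 := by
      rw [hτ, ← mul_assoc, hdswapρ.commute.eq, mul_assoc, hc2def]
    have hsupc2 : c2.support = insert a c.support := support_swap_mul_fix hab hac hbc
    have hc2Is : c2.IsCycle := isCycle_swap_mul_fix hab hac hbc hcIs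
    have hdis2 : Equiv.Perm.Disjoint ρ c2 := by
      rw [Equiv.Perm.disjoint_iff_disjoint_support, hsupc2]
      rw [Finset.disjoint_insert_right]
      exact ⟨haρ, hsupρc⟩
    have e1 : τ.cycleType.card = ρ.cycleType.card + 1 := by
      rw [hτ, hdis.cycleType_mul, hcIs.cycleType]; simp
    have e2 : (swap a b * τ).cycleType.card = ρ.cycleType.card + 1 := by
      rw [hσ', hdis2.cycleType_mul, hc2Is.cycleType]; simp
    have hamem : a ∉ ρ.support ∪ c.support := by
      rw [← hsupτ]; exact haS
    have s2 : (swap a b * τ).support.card = τ.support.card + 1 := by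
      rw [hσ', hdis2.support_mul, hsupc2, Finset.union_insert,
        Finset.card_insert_of_notMem hamem, hsupτ]
    have hle : τ.support.card + 1 ≤ Fintype.card α := by
      have := Finset.card_le_univ (swap a b * τ).support
      omega
    unfold ncG
    rw [s2, e1, e2]
    omega

lemma numCycles_eq_ncG {N : ℕ} (σ : Perm (Fin N)) : numCycles σ = ncG σ := by
  unfold numCycles ncG
  congr 1
  have : (Finset.univ.filter fun x => σ x = x) = σ.supportᶜ := by
    ext x; simp [Equiv.Perm.mem_support]
  rw [this, Finset.card_compl]

lemma numCycles_le {N : ℕ} (σ : Perm (Fin N)) : numCycles σ ≤ N := by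
  rw [numCycles_eq_ncG]
  unfold ncG
  have h1 := cycleType_card_le_support σ
  have h2 : σ.support.card ≤ N := by
    simpa using Finset.card_le_univ σ.support
  have : Fintype.card (Fin N) = N := Fintype.card_fin N
  omega

lemma numCycles_one (N : ℕ) : numCycles (1 : Perm (Fin N)) = N := by
  unfold numCycles
  simp [Equiv.Perm.cycleType_one]

def finSuccNeEquiv (n : ℕ) : Fin n ≃ {x : Fin (n + 1) // x ≠ 0} where
  toFun i := ⟨i.succ, i.succ_ne_zero⟩
  invFun x := x.1.pred x.2
  left_inv i := by simp
  right_inv x := by simp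

lemma decomposeFin_symm_zero {n : ℕ} (e : Perm (Fin n)) :
    Perm.decomposeFin.symm ((0 : Fin (n + 1)), e)
      = e.extendDomain (finSuccNeEquiv n) := by
  ext x
  refine Fin.cases ?_ ?_ x
  · rw [Perm.decomposeFin_symm_apply_zero, Perm.extendDomain_apply_not_subtype]
    simp
  · intro i
    rw [Perm.decomposeFin_symm_apply_succ, swap_self]
    have h1 : (i.succ : Fin (n + 1)) = ((finSuccNeEquiv n) i : Fin (n + 1)) := rfl
    rw [h1]
    rw [show ((finSuccNeEquiv n) i : Fin (n+1))
        = ((finSuccNeEquiv n) i : {x : Fin (n+1) // x ≠ 0}) from rfl]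
    rw [Perm.extendDomain_apply_image]
    rfl

lemma numCycles_decomposeFin_zero {n : ℕ} (e : Perm (Fin n)) :
    numCycles (Perm.decomposeFin.symm ((0 : Fin (n + 1)), e)) = numCycles e + 1 := by
  rw [decomposeFin_symm_zero, numCycles_eq_ncG, numCycles_eq_ncG]
  unfold ncG
  rw [Equiv.Perm.card_support_extend_domain, Equiv.Perm.cycleType_extendDomain]
  have hle : e.support.card ≤ n := by simpa using Finset.card_le_univ e.support
  simp only [Fintype.card_fin]
  omega

lemma decomposeFin_symm_ne_zero {n : ℕ} (p : Fin (n + 1)) (e : Perm (Fin n)) :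
    Perm.decomposeFin.symm (p, e)
      = swap 0 p * Perm.decomposeFin.symm ((0 : Fin (n + 1)), e) := by
  ext x
  refine Fin.cases ?_ ?_ x
  · rw [Perm.decomposeFin_symm_apply_zero, Perm.mul_apply,
      Perm.decomposeFin_symm_apply_zero, swap_apply_left]
  · intro i
    rw [Perm.decomposeFin_symm_apply_succ, Perm.mul_apply,
      Perm.decomposeFin_symm_apply_succ, swap_self]
    rfl

lemma numCycles_decomposeFin_ne_zero {n : ℕ} (p : Fin (n + 1)) (e : Perm (Fin n))
    (hp : p ≠ 0) :
    numCycles (Perm.decomposeFin.symm (p, e)) = numCycles e := by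
  rw [decomposeFin_symm_ne_zero]
  set τ := Perm.decomposeFin.symm ((0 : Fin (n + 1)), e) with hτ
  have hfix : τ (0 : Fin (n + 1)) = 0 := Perm.decomposeFin_symm_apply_zero 0 e
  have key := ncG_swap_mul (a := (0 : Fin (n + 1))) (b := p) (Ne.symm hp) hfix
  have h2 : numCycles τ = numCycles e + 1 := numCycles_decomposeFin_zero e
  simp only [numCycles_eq_ncG] at h2 ⊢
  omega

lemma sum_pow_numCycles (n : ℕ) (x : ℝ) :
    ∑ σ : Perm (Fin n), x ^ numCycles σ
      = ∏ k ∈ Finset.range n, (x + (k : ℝ)) := by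
  induction n with
  | zero =>
    have h1 : (Finset.univ : Finset (Perm (Fin 0))) = {1} :=
      Finset.eq_singleton_iff_unique_mem.mpr
        ⟨Finset.mem_univ _, fun σ _ => Equiv.ext fun i => i.elim0⟩
    rw [h1, Finset.sum_singleton, Finset.range_zero, Finset.prod_empty]
    have h2 : numCycles (1 : Perm (Fin 0)) = 0 := numCycles_one 0
    rw [h2, pow_zero]
  | succ n ih =>
    have hequiv := Fintype.sum_equiv (Perm.decomposeFin (n := n))
      (fun σ => x ^ numCycles σ)
      (fun pe => x ^ numCycles (Perm.decomposeFin.symm pe))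
      (fun σ => by simp only [Equiv.symm_apply_apply])
    rw [hequiv, Fintype.sum_prod_type, Finset.sum_comm]
    have hrow : ∀ e : Perm (Fin n),
        (∑ p : Fin (n + 1), x ^ numCycles (Perm.decomposeFin.symm (p, e)))
          = (x + n) * x ^ numCycles e := by
      intro e
      rw [← Finset.add_sum_erase _ _ (Finset.mem_univ (0 : Fin (n + 1))),
        numCycles_decomposeFin_zero e]
      have : ∀ p ∈ Finset.univ.erase (0 : Fin (n + 1)),
          x ^ numCycles (Perm.decomposeFin.symm (p, e)) = x ^ numCycles e := by
        intro p hp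
        rw [numCycles_decomposeFin_ne_zero p e (Finset.ne_of_mem_erase hp)]
      rw [Finset.sum_congr rfl this, Finset.sum_const,
        Finset.card_erase_of_mem (Finset.mem_univ _), Finset.card_univ,
        Fintype.card_fin]
      simp only [Nat.add_sub_cancel, nsmul_eq_mul, pow_succ]
      ring
    rw [Finset.sum_congr rfl (fun e _ => hrow e), ← Finset.mul_sum,
      Finset.prod_range_succ, ih]
    ring

set_option maxHeartbeats 1000000 in
/-- The Gershgorin radius of the Cayley distance kernel:
`∑_{σ ≠ e} e^{−β·d_C(e,σ)} = e^{−βN}·∏_{k=0}^{N−1}(e^β + k) − 1`. -/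
theorem gershgorin_radius_cayleyKernel (N : ℕ) (hN : 1 ≤ N) (β : ℝ) :
    ∑ σ ∈ Finset.univ.erase (1 : Perm (Fin N)),
        Real.exp (-β * (cayleyDist 1 σ : ℝ))
      = Real.exp (-β * N) * (∏ k ∈ Finset.range N, (Real.exp β + (k : ℝ))) - 1 := by
  have hterm : ∀ σ : Perm (Fin N),
      Real.exp (-β * (cayleyDist 1 σ : ℝ))
        = Real.exp (-β * N) * Real.exp β ^ numCycles σ := by
    intro σ
    have h1 : cayleyDist 1 σ = N - numCycles σ := by
      unfold cayleyDist; rw [inv_one, one_mul]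
    have hle := numCycles_le σ
    rw [h1, Nat.cast_sub hle,
      show -β * ((N : ℝ) - (numCycles σ : ℝ))
        = -β * N + (numCycles σ : ℕ) * β by push_cast; ring,
      Real.exp_add, Real.exp_nat_mul]
  have hsum : ∑ σ : Perm (Fin N), Real.exp (-β * (cayleyDist 1 σ : ℝ))
      = Real.exp (-β * N) * ∏ k ∈ Finset.range N, (Real.exp β + (k : ℝ)) := by
    rw [Finset.sum_congr rfl (fun σ _ => hterm σ), ← Finset.mul_sum,
      sum_pow_numCycles]
  have hf1 : Real.exp (-β * ((cayleyDist (1 : Perm (Fin N)) 1 : ℕ) : ℝ)) = 1 := by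
    have h0 : cayleyDist (1 : Perm (Fin N)) 1 = 0 := by
      unfold cayleyDist; rw [inv_one, one_mul, numCycles_one, Nat.sub_self]
    rw [h0]; simp
  have hsplit : Real.exp (-β * ((cayleyDist (1 : Perm (Fin N)) 1 : ℕ) : ℝ))
      + ∑ σ ∈ Finset.univ.erase (1 : Perm (Fin N)),
          Real.exp (-β * (cayleyDist 1 σ : ℝ))
      = ∑ σ : Perm (Fin N), Real.exp (-β * (cayleyDist 1 σ : ℝ)) :=
    Finset.add_sum_erase Finset.univ
      (fun σ => Real.exp (-β * ((cayleyDist (1 : Perm (Fin N)) σ : ℕ) : ℝ)))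
      (Finset.mem_univ (1 : Perm (Fin N)))
  rw [hf1, hsum] at hsplit
  linarith

end Aux
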